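/- arXiv:2412.12281 — 10 statements merged into one kernel-verified Lean document; each statement's English description precedes it below -/
import Mathlib

section
/- Let C be a skeletal category all of whose hom-sets are finite. If there exist an epimorphism f : c ⟶ d and an epimorphism g : d ⟶ c between objects c and d, then c = d. (This antisymmetry underlies the paper's claim that the epimorphism matrix is conjugate to a triangular matrix.) -/
open CategoryTheory

/-- In a skeletal category with finite hom-sets, if there are epimorphisms in both
directions between `c` and `d`, then `c = d`. -/
theorem eq_of_epi_of_epi_of_skeletal {C : Type*} [Category C]
    [∀ a b : C, Finite (a ⟶ b)] (hskel : Skeletal C) {c d : C}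
    (f : c ⟶ d) (g : d ⟶ c) (hf : Epi f) (hg : Epi g) : c = d := by
  have hepi : Epi (f ≫ g) := epi_comp f g
  have hinj : Function.Injective (fun h : c ⟶ c => (f ≫ g) ≫ h) := by
    intro h₁ h₂ e
    exact (cancel_epi (f ≫ g)).mp e
  have hsurj := Finite.surjective_of_injective hinj
  obtain ⟨h, hh⟩ := hsurj (𝟙 c)
  simp only at hh
  have hfr : f ≫ (g ≫ h) = 𝟙 c := by rw [← Category.assoc]; exact hh
  have hrf : (g ≫ h) ≫ f = 𝟙 d := by
    have := hf
    rw [← cancel_epi f, ← Category.assoc, hfr, Category.id_comp, Category.comp_id]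
  exact hskel ⟨⟨f, g ≫ h, hfr, hrf⟩⟩
end

section
/- Let C be a category whose hom-sets are finite, and let P be a class of morphisms of C such that every morphism in P is an epimorphism and P is stable under postcomposition with isomorphisms. Then for all objects c, d, the cardinality #Aut(d) of the automorphism group of d divides the number of morphisms c ⟶ d lying in P. (In particular the entries |E(c,d)|/|Aut(d)| of the epimorphism matrix are integers, since Aut(d) acts freely on E(c,d) by the cancellation property of epimorphisms.) -/
open CategoryTheory

/-- If every morphism in the class `P` is an epimorphism and `P` is stable under
postcomposition with isomorphisms, then `#Aut(d)` divides the number of morphisms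
`c ⟶ d` lying in `P`. -/
theorem card_aut_dvd_card_epiClass {C : Type*} [Category C]
    [∀ a b : C, Finite (a ⟶ b)] (P : MorphismProperty C)
    (hepi : ∀ {a b : C} (f : a ⟶ b), P f → Epi f)
    (hpost : ∀ {a b b' : C} (f : a ⟶ b) (e : b ≅ b'), P f → P (f ≫ e.hom))
    (c d : C) :
    Nat.card (Aut d) ∣ Nat.card {f : c ⟶ d // P f} := by
  classical
  letI : MulAction (Aut d) {f : c ⟶ d // P f} :=
    { smul := fun g f => ⟨f.1 ≫ g.hom, hpost f.1 g f.2⟩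
      one_smul := fun f => by
        ext : 1
        exact Category.comp_id _
      mul_smul := fun g h f => by
        ext : 1
        show f.1 ≫ (g * h).hom = (f.1 ≫ h.hom) ≫ g.hom
        simp [Aut.Aut_mul_def]; rfl }
  have hsmul : ∀ (g : Aut d) (f : {f : c ⟶ d // P f}), (g • f).1 = f.1 ≫ g.hom :=
    fun _ _ => rfl
  have horbE : ∀ f : {f : c ⟶ d // P f}, Aut d ≃ MulAction.orbit (Aut d) f := by
    intro f
    refine Equiv.ofBijective (fun g => ⟨g • f, MulAction.mem_orbit f g⟩) ⟨?_, ?_⟩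
    · intro g₁ g₂ hg
      have : f.1 ≫ g₁.hom = f.1 ≫ g₂.hom := by
        have := congrArg (fun x => (x.1 : {f : c ⟶ d // P f}).1) hg
        simpa [hsmul] using this
      haveI hE := hepi f.1 f.2
      exact Aut.ext ((cancel_epi f.1).mp this)
    · rintro ⟨x, g, rfl⟩
      exact ⟨g, rfl⟩
  haveI : Finite (Aut d) :=
    Finite.of_injective (fun g : Aut d => (g.hom, g.inv))
      (fun g₁ g₂ h => Aut.ext (congrArg Prod.fst h))
  haveI : Fintype {f : c ⟶ d // P f} := Fintype.ofFinite _
  haveI : Fintype (MulAction.orbitRel.Quotient (Aut d) {f : c ⟶ d // P f}) :=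
    Fintype.ofFinite _
  haveI : ∀ ω : MulAction.orbitRel.Quotient (Aut d) {f : c ⟶ d // P f},
      Fintype (MulAction.orbit (Aut d) (Quotient.out ω)) := fun _ => Fintype.ofFinite _
  haveI : Fintype (Aut d) := Fintype.ofFinite _
  have e := MulAction.selfEquivSigmaOrbits (Aut d) {f : c ⟶ d // P f}
  rw [Nat.card_congr e]
  simp only [Nat.card_eq_fintype_card]
  rw [Fintype.card_sigma]
  have key : ∀ ω : MulAction.orbitRel.Quotient (Aut d) {f : c ⟶ d // P f},
      Fintype.card (MulAction.orbit (Aut d) (Quotient.out ω)) = Fintype.card (Aut d) :=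
    fun ω => (Fintype.card_congr (horbE (Quotient.out ω))).symm
  rw [Finset.sum_congr rfl (fun ω _ => key ω), Finset.sum_const, smul_eq_mul]
  exact Dvd.intro_left _ rfl
end

section
/- Let C be a finite skeletal category and let P be a class of morphisms of C containing all isomorphisms, closed under composition, and such that every morphism in P is an epimorphism. Then the matrix E over ℚ, indexed by the objects of C, with entries E c d = (number of morphisms c ⟶ d in P) / #Aut(d), has determinant 1. (The paper: 'the epimorphism matrix is conjugate to a lower triangular matrix' with diagonal entries 1.) -/
open CategoryTheory

section Aux

variable {C : Type*} [Category C]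

lemma epi_isIso_of_endo {c : C} [Finite (c ⟶ c)] (f : c ⟶ c) (hf : Epi f) : IsIso f := by
  have hinj : Function.Injective (fun g : c ⟶ c => f ≫ g) := fun g h hgh => by
    simpa using (cancel_epi f).1 hgh
  obtain ⟨g, hg⟩ := (Finite.injective_iff_surjective.1 hinj) (𝟙 c)
  replace hg : f ≫ g = 𝟙 c := hg
  refine ⟨g, hg, ?_⟩
  have : f ≫ g ≫ f = f ≫ 𝟙 c := by
    rw [← Category.assoc, hg, Category.id_comp, Category.comp_id]
  exact (cancel_epi f).1 this

lemma epi_isIso_of_retraction {c d : C} (f : c ⟶ d) (h : d ⟶ c) (hf : Epi f)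
    (hfh : f ≫ h = 𝟙 c) : IsIso f := by
  refine ⟨h, hfh, ?_⟩
  have : f ≫ h ≫ f = f ≫ 𝟙 d := by
    rw [← Category.assoc, hfh, Category.id_comp, Category.comp_id]
  exact (cancel_epi f).1 this

end Aux

/-- Determinant of a matrix triangular with respect to a partial-order-like relation. -/
lemma det_eq_prod_diag_of_rel {n : Type*} [Fintype n] [DecidableEq n]
    (r : n → n → Prop) (hrefl : ∀ a, r a a)
    (htrans : ∀ {a b c}, r a b → r b c → r a c)
    (hanti : ∀ {a b}, r a b → r b a → a = b)
    (M : Matrix n n ℚ) (hM : ∀ i j, ¬ r i j → M i j = 0) :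
    M.det = ∏ i, M i i := by
  haveI : IsPartialOrder n r :=
    { refl := hrefl, trans := fun _ _ _ => htrans, antisymm := fun _ _ => hanti }
  obtain ⟨s, hs, hrs⟩ := extend_partialOrder r
  letI : LinearOrder n :=
    { le := s
      lt := fun a b => s a b ∧ ¬ s b a
      le_refl := fun a => hs.refl a
      le_trans := fun a b c => hs.trans a b c
      le_antisymm := fun a b => hs.antisymm a b
      le_total := fun a b => hs.total a b
      lt_iff_le_not_ge := fun _ _ => Iff.rfl
      toDecidableLE := fun _ _ => Classical.dec _ }
  refine Matrix.det_of_upperTriangular (fun i j hij => ?_)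
  have hij' : s j i ∧ ¬ s i j := hij
  exact hM i j (fun hr => hij'.2 (hrs _ _ hr))

/-- In a finite skeletal category, if `P` is a class of morphisms containing all
isomorphisms, closed under composition, and consisting of epimorphisms, then the
epimorphism matrix `E c d = |P(c,d)| / #Aut(d)` has determinant `1`. -/
theorem det_epiMatrix_eq_one {C : Type*} [Category C] [Fintype C] [DecidableEq C]
    [∀ a b : C, Finite (a ⟶ b)] (hskel : Skeletal C)
    (P : MorphismProperty C)
    (hiso : ∀ {a b : C} (f : a ⟶ b), IsIso f → P f)
    (hcomp : ∀ {a b c : C} (f : a ⟶ b) (g : b ⟶ c), P f → P g → P (f ≫ g))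
    (hepi : ∀ {a b : C} (f : a ⟶ b), P f → Epi f) :
    (Matrix.of fun c d : C =>
      (Nat.card {f : c ⟶ d // P f} : ℚ) / (Nat.card (Aut d) : ℚ)).det = 1 := by
  haveI : ∀ c : C, Finite (Aut c) := fun c =>
    Finite.of_injective (fun g : Aut c => g.hom) (fun g h hgh => Iso.ext hgh)
  -- the relation: existence of a P-morphism
  set r : C → C → Prop := fun c d => ∃ f : c ⟶ d, P f with hr
  have hrefl : ∀ c, r c c := fun c => ⟨𝟙 c, hiso _ inferInstance⟩
  have htrans : ∀ {a b c : C}, r a b → r b c → r a c := by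
    rintro a b c ⟨f, hf⟩ ⟨g, hg⟩; exact ⟨f ≫ g, hcomp f g hf hg⟩
  have hanti : ∀ {a b : C}, r a b → r b a → a = b := by
    rintro a b ⟨f, hf⟩ ⟨g, hg⟩
    have hfg : P (f ≫ g) := hcomp f g hf hg
    haveI : IsIso (f ≫ g) := epi_isIso_of_endo _ (hepi _ hfg)
    haveI : IsIso f := epi_isIso_of_retraction f (g ≫ inv (f ≫ g)) (hepi f hf)
      (by rw [← Category.assoc, IsIso.hom_inv_id])
    exact hskel ⟨asIso f⟩
  -- zero off the relation
  have hzero : ∀ c d : C, ¬ r c d →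
      (Nat.card {f : c ⟶ d // P f} : ℚ) / (Nat.card (Aut d) : ℚ) = 0 := by
    intro c d h
    have : IsEmpty {f : c ⟶ d // P f} := ⟨fun f => h ⟨f.1, f.2⟩⟩
    rw [Nat.card_of_isEmpty]; simp
  -- diagonal entries are 1
  have hdiag : ∀ c : C,
      (Nat.card {f : c ⟶ c // P f} : ℚ) / (Nat.card (Aut c) : ℚ) = 1 := by
    intro c
    have hcard : Nat.card {f : c ⟶ c // P f} = Nat.card (Aut c) := by
      refine Nat.card_congr ?_
      refine
        { toFun := fun f => @asIso _ _ _ _ f.1 (epi_isIso_of_endo f.1 (hepi f.1 f.2))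
          invFun := fun g => ⟨g.hom, hiso g.hom (Iso.isIso_hom g)⟩
          left_inv := fun f => Subtype.ext rfl
          right_inv := fun g => Iso.ext rfl }
    have hpos : (0 : ℚ) < Nat.card (Aut c) := by
      have := Nat.card_pos (α := Aut c)
      exact_mod_cast this
    rw [hcard, div_self hpos.ne']
  have hdet := det_eq_prod_diag_of_rel r hrefl htrans hanti
    (Matrix.of fun c d : C => (Nat.card {f : c ⟶ d // P f} : ℚ) / (Nat.card (Aut d) : ℚ))
    (fun i j h => hzero i j h)
  rw [hdet]
  simp only [Matrix.of_apply]
  exact Finset.prod_eq_one fun c _ => hdiag c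
end

section
/- Let C be a finite skeletal category and let Q be a class of morphisms of C containing all isomorphisms, closed under composition, and such that every morphism in Q is a monomorphism. Then the matrix M over ℚ, indexed by the objects of C, with entries M c d = (number of morphisms c ⟶ d in Q) / #Aut(c), has determinant 1. (The paper: 'the monomorphism matrix is conjugate to an upper triangular matrix' with diagonal entries 1.) -/
open CategoryTheory

section Aux
variable {C : Type*} [Category C]

lemma aux_endo_iso {c : C} [Finite (c ⟶ c)] (f : c ⟶ c) (hf : Mono f) : IsIso f := by
  haveI := hf
  have hinj : Function.Injective (fun g : c ⟶ c => g ≫ f) := fun a b h => by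
    exact (cancel_mono f).mp h
  obtain ⟨g, hg⟩ := (Finite.injective_iff_surjective.mp hinj) (𝟙 c)
  simp only at hg
  refine ⟨g, ?_, hg⟩
  have h2 : (f ≫ g) ≫ f = 𝟙 c ≫ f := by
    rw [Category.assoc, hg, Category.comp_id, Category.id_comp]
  exact (cancel_mono f).mp h2

lemma aux_pair_iso {c d : C} [Finite (c ⟶ c)] [Finite (d ⟶ d)]
    (f : c ⟶ d) (g : d ⟶ c) (hf : Mono f) (hg : Mono g) : IsIso f := by
  have h1 : IsIso (f ≫ g) := aux_endo_iso _ (mono_comp f g)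
  let a : d ⟶ c := g ≫ inv (f ≫ g)
  have hfa : f ≫ a = 𝟙 c := by
    show f ≫ g ≫ inv (f ≫ g) = 𝟙 c
    rw [← Category.assoc, IsIso.hom_inv_id]
  have haf : a ≫ f = 𝟙 d := by
    haveI := hg
    have : (a ≫ f) ≫ g = 𝟙 d ≫ g := by
      rw [Category.assoc, Category.id_comp]
      simp [a]
    exact (cancel_mono g).mp this
  exact ⟨a, hfa, haf⟩

end Aux

/-- In a finite skeletal category, if `Q` is a class of morphisms containing all
isomorphisms, closed under composition, and consisting of monomorphisms, then the
monomorphism matrix `M c d = |Q(c,d)| / #Aut(c)` has determinant `1`. -/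
theorem det_monoMatrix_eq_one {C : Type*} [Category C] [Fintype C] [DecidableEq C]
    [∀ a b : C, Finite (a ⟶ b)] (hskel : Skeletal C)
    (Q : MorphismProperty C)
    (hiso : ∀ {a b : C} (f : a ⟶ b), IsIso f → Q f)
    (hcomp : ∀ {a b c : C} (f : a ⟶ b) (g : b ⟶ c), Q f → Q g → Q (f ≫ g))
    (hmono : ∀ {a b : C} (f : a ⟶ b), Q f → Mono f) :
    (Matrix.of fun c d : C =>
      (Nat.card {f : c ⟶ d // Q f} : ℚ) / (Nat.card (Aut c) : ℚ)).det = 1 := by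
  classical
  have hanti : ∀ c d : C, Nonempty {f : c ⟶ d // Q f} → Nonempty {f : d ⟶ c // Q f} → c = d := by
    rintro c d ⟨f⟩ ⟨g⟩
    haveI : IsIso f.1 := aux_pair_iso f.1 g.1 (hmono _ f.2) (hmono _ g.2)
    exact hskel ⟨asIso f.1⟩
  -- partial order on C
  letI P : PartialOrder C :=
    { le := fun c d => Nonempty {f : c ⟶ d // Q f}
      le_refl := fun c => ⟨⟨𝟙 c, hiso _ inferInstance⟩⟩
      le_trans := fun a b c h h' => h.elim fun f => h'.elim fun g => ⟨⟨f.1 ≫ g.1, hcomp _ _ f.2 g.2⟩⟩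
      le_antisymm := fun c d h h' => hanti c d h h' }
  letI : Fintype (LinearExtension C) := ‹Fintype C›
  obtain ⟨n, hn⟩ : ∃ n, Fintype.card (LinearExtension C) = n := ⟨_, rfl⟩
  let e : Fin n ≃o LinearExtension C := monoEquivOfFin _ hn
  set M : Matrix C C ℚ := Matrix.of fun c d : C =>
    (Nat.card {f : c ⟶ d // Q f} : ℚ) / (Nat.card (Aut c) : ℚ) with hM
  have key : ∀ c : C, Finite (Aut c) := fun c =>
    Finite.of_injective (fun g : Aut c => g.hom) (fun a b h => Iso.ext h)
  have autpos : ∀ c : C, 0 < Nat.card (Aut c) := fun c => by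
    haveI := key c
    exact Nat.card_pos
  have hdiag : ∀ c : C, M c c = 1 := by
    intro c
    have : Nat.card {f : c ⟶ c // Q f} = Nat.card (Aut c) := by
      refine Nat.card_eq_of_bijective (fun f => @asIso _ _ _ _ f.1
        (aux_endo_iso f.1 (hmono _ f.2))) ?_
      constructor
      · intro a b h
        exact Subtype.ext (congrArg Iso.hom h)
      · intro g
        exact ⟨⟨g.hom, hiso _ (Iso.isIso_hom g)⟩, Iso.ext rfl⟩
    simp only [hM, Matrix.of_apply, this]
    rw [div_self]
    exact_mod_cast (autpos c).ne'
  have hzero : ∀ c d : C, M c d ≠ 0 → (toLinearExtension c : LinearExtension C) ≤ toLinearExtension d := by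
    intro c d h
    have hne : Nonempty {f : c ⟶ d // Q f} := by
      by_contra hne
      rw [not_nonempty_iff] at hne
      apply h
      simp [hM, Nat.card_of_isEmpty]
    exact toLinearExtension.monotone (hne : P.le c d)
  have hsub : (M.submatrix ⇑e.toEquiv ⇑e.toEquiv).det = 1 := by
    rw [Matrix.det_of_upperTriangular]
    · rw [Finset.prod_congr rfl (fun i _ => by
        show M (e.toEquiv i) (e.toEquiv i) = 1
        exact hdiag _)]
      simp
    · intro i j hij
      simp only [id] at hij
      show M (e.toEquiv i) (e.toEquiv j) = 0
      by_contra h0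
      have hle : (e i : LinearExtension C) ≤ e j := hzero _ _ h0
      exact absurd (e.le_iff_le.mp hle) (not_le.mpr hij)
  convert (Matrix.det_submatrix_equiv_self (e.toEquiv) M).symm.trans hsub
  have hdec : ∀ i j : DecidableEq C, @Matrix.det C i _ ℚ _ M = @Matrix.det C j _ ℚ _ M := fun i j => by
    rw [Subsingleton.elim i j]
  exact hdec _ _
end

section
/- (Yoshida's decomposition of the hom-set matrix.) Let C be a finite skeletal category equipped with an epi-mono factorization system (P, Q). Define matrices over ℚ indexed by the objects of C: the hom-set matrix H with H c d = #Hom(c,d); the epimorphism matrix E with E c d = (number of morphisms c ⟶ d in P) / #Aut(d); the automorphism matrix A with A c d = #Aut(c) if c = d and 0 otherwise; and the monomorphism matrix M with M c d = (number of morphisms c ⟶ d in Q) / #Aut(c). Then H = E * A * M. -/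
open CategoryTheory

/-- Yoshida's decomposition `H = E * A * M` of the hom-set matrix of a finite skeletal
category equipped with an epi-mono factorization system `(P, Q)`. -/
theorem homMatrix_eq_epi_mul_aut_mul_mono {C : Type*} [Category C] [Fintype C]
    [DecidableEq C] [∀ a b : C, Finite (a ⟶ b)] (hskel : Skeletal C)
    (P Q : MorphismProperty C)
    (hPepi : ∀ {a b : C} (f : a ⟶ b), P f → Epi f)
    (hQmono : ∀ {a b : C} (f : a ⟶ b), Q f → Mono f)
    (hPiso : ∀ {a b : C} (f : a ⟶ b), IsIso f → P f)
    (hQiso : ∀ {a b : C} (f : a ⟶ b), IsIso f → Q f)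
    (hPcomp : ∀ {a b c : C} (f : a ⟶ b) (g : b ⟶ c), P f → P g → P (f ≫ g))
    (hQcomp : ∀ {a b c : C} (f : a ⟶ b) (g : b ⟶ c), Q f → Q g → Q (f ≫ g))
    (hfact : ∀ {c d : C} (f : c ⟶ d),
      ∃ (z : C) (e : c ⟶ z) (m : z ⟶ d), P e ∧ Q m ∧ e ≫ m = f)
    (huniq : ∀ {c d z z' : C} (e : c ⟶ z) (e' : c ⟶ z') (m : z ⟶ d) (m' : z' ⟶ d),
      P e → P e' → Q m → Q m' → e ≫ m = e' ≫ m' →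
      ∃ φ : z ≅ z', e ≫ φ.hom = e' ∧ φ.hom ≫ m' = m) :
    (Matrix.of fun c d : C => (Nat.card (c ⟶ d) : ℚ)) =
      (Matrix.of fun c d : C =>
        (Nat.card {f : c ⟶ d // P f} : ℚ) / (Nat.card (Aut d) : ℚ)) *
      (Matrix.of fun c d : C => if c = d then (Nat.card (Aut c) : ℚ) else 0) *
      (Matrix.of fun c d : C =>
        (Nat.card {f : c ⟶ d // Q f} : ℚ) / (Nat.card (Aut c) : ℚ)) := by
  classical
  have hautfin : ∀ z : C, Finite (Aut z) := fun z =>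
    Finite.of_injective (fun φ : Aut z => (φ.hom, φ.inv))
      (by intro a b h; simp only [Prod.mk.injEq] at h; exact Iso.ext h.1)
  have autpos : ∀ z : C, (0 : ℚ) < Nat.card (Aut z) := fun z => by
    have := hautfin z; exact_mod_cast Nat.card_pos
  have hfact' : ∀ (c d : C) (f : c ⟶ d),
      ∃ (z : C) (e : c ⟶ z) (m : z ⟶ d), P e ∧ Q m ∧ e ≫ m = f := fun c d f => hfact f
  choose mid e0 m0 hP0 hQ0 hcomp0 using hfact'
  have hmid : ∀ {c d z : C} (e : c ⟶ z) (m : z ⟶ d), P e → Q m → mid c d (e ≫ m) = z := by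
    intro c d z e m hPe hQm
    obtain ⟨φ, -, -⟩ := huniq (e0 c d (e ≫ m)) e (m0 c d (e ≫ m)) m
      (hP0 c d _) hPe (hQ0 c d _) hQm (by rw [hcomp0])
    exact hskel ⟨φ⟩
  -- key counting identity for a fixed middle object
  have key : ∀ c d z : C,
      (Nat.card {e : c ⟶ z // P e} : ℚ) * (Nat.card {m : z ⟶ d // Q m} : ℚ) =
        (Nat.card {f : c ⟶ d // mid c d f = z} : ℚ) * (Nat.card (Aut z) : ℚ) := by
    intro c d z
    have := hautfin z
    rw [← Nat.cast_mul, ← Nat.cast_mul, ← Nat.card_prod, ← Nat.card_prod]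
    congr 1
    symm
    apply Nat.card_congr
    refine Equiv.ofBijective (fun p =>
      (⟨e0 c d p.1.1 ≫ eqToHom p.1.2 ≫ p.2.hom,
        hPcomp _ _ (hP0 c d _) (hPiso _ (by haveI : IsIso p.2.hom := Iso.isIso_hom p.2; infer_instance))⟩,
       ⟨p.2.inv ≫ eqToHom p.1.2.symm ≫ m0 c d p.1.1,
        hQcomp _ _ (hQiso _ (Iso.isIso_inv p.2))
          (hQcomp _ _ (hQiso _ inferInstance) (hQ0 c d _))⟩)) ⟨?_, ?_⟩
    · rintro ⟨⟨f, hf⟩, φ⟩ ⟨⟨g, hg⟩, ψ⟩ h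
      simp only [Prod.mk.injEq, Subtype.mk.injEq] at h
      obtain ⟨h1, h2⟩ := h
      have hfg : f = g := by
        have : (e0 c d f ≫ eqToHom hf ≫ φ.hom) ≫ (φ.inv ≫ eqToHom hf.symm ≫ m0 c d f) = f := by
          simp [hcomp0, Iso.hom_inv_id_assoc (φ : z ≅ z)]
        rw [h1, h2] at this
        rw [← this]
        simp [hcomp0, Iso.hom_inv_id_assoc (ψ : z ≅ z)]
      subst hfg
      have hφψ : φ = ψ := by
        have hepi : Epi (e0 c d f) := hPepi _ (hP0 c d f)
        have h1' : eqToHom hf ≫ φ.hom = eqToHom hf ≫ ψ.hom := by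
          rwa [← cancel_epi (e0 c d f)]
        have : φ.hom = ψ.hom := by
          rwa [cancel_epi (eqToHom hf)] at h1'
        exact Iso.ext this
      simp [hφψ]
    · rintro ⟨⟨e, he⟩, ⟨m, hm⟩⟩
      have hf : mid c d (e ≫ m) = z := hmid e m he hm
      obtain ⟨φ, hφ1, hφ2⟩ := huniq (e0 c d (e ≫ m)) e (m0 c d (e ≫ m)) m
        (hP0 c d _) he (hQ0 c d _) hm (by rw [hcomp0])
      refine ⟨⟨⟨e ≫ m, hf⟩, eqToIso hf.symm ≪≫ φ⟩, ?_⟩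
      simp only [Prod.mk.injEq, Subtype.mk.injEq, Iso.trans_hom, Iso.trans_inv,
        eqToIso.hom, eqToIso.inv]
      constructor
      · rw [eqToHom_trans_assoc]
        simpa using hφ1
      · rw [Category.assoc, eqToHom_trans_assoc]
        simp only [eqToHom_refl, Category.id_comp]
        rw [← hφ2]
        simp
  -- total count: fibers of `mid c d`
  have tot : ∀ c d : C,
      (Nat.card (c ⟶ d) : ℚ) = ∑ z : C, (Nat.card {f : c ⟶ d // mid c d f = z} : ℚ) := by
    intro c d
    letI : Fintype (c ⟶ d) := Fintype.ofFinite _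
    have e := (Equiv.sigmaFiberEquiv (mid c d)).symm
    rw [Nat.card_congr e]
    rw [Nat.card_eq_fintype_card]
    rw [Fintype.card_sigma]
    push_cast
    congr 1
    ext z
    rw [Nat.card_eq_fintype_card]
  -- matrix computation
  ext c d
  simp only [Matrix.mul_apply, Matrix.of_apply]
  have inner : ∀ z : C,
      (∑ w : C, (Nat.card {f : c ⟶ w // P f} : ℚ) / (Nat.card (Aut w) : ℚ) *
        (if w = z then (Nat.card (Aut w) : ℚ) else 0)) =
      (Nat.card {f : c ⟶ z // P f} : ℚ) := by
    intro z
    rw [Finset.sum_eq_single z]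
    · rw [if_pos rfl, div_mul_cancel₀]
      exact (autpos z).ne'
    · intro w _ hw
      rw [if_neg hw, mul_zero]
    · intro h; exact absurd (Finset.mem_univ z) h
  calc (Nat.card (c ⟶ d) : ℚ)
      = ∑ z : C, (Nat.card {f : c ⟶ d // mid c d f = z} : ℚ) := tot c d
    _ = ∑ z : C, (Nat.card {f : c ⟶ z // P f} : ℚ) *
          ((Nat.card {m : z ⟶ d // Q m} : ℚ) / (Nat.card (Aut z) : ℚ)) := by
        refine Finset.sum_congr rfl fun z _ => ?_
        rw [mul_div_assoc', key c d z, mul_div_cancel_right₀]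
        exact (autpos z).ne'
    _ = _ := by
        refine Finset.sum_congr rfl fun z _ => ?_
        rw [inner z]
end

section
/- (The rational Burnside homomorphism is an isomorphism.) Let C be a finite skeletal category equipped with an epi-mono factorization system (P, Q). Then the ℚ-linear map φ : (objects of C → ℚ) → (objects of C → ℚ) defined by φ(x)(c) = Σ over objects d of x(d) · #Hom(c,d) is bijective. (Equivalently, the rational abstract Burnside ring A_ℚ(C) exists and the Burnside homomorphism A_ℚ(C) → ℚ^C is an isomorphism.) -/
open CategoryTheory

private lemma isIso_of_comp_comp {C : Type*} [Category C] {a b : C} (f : a ⟶ b) (g : b ⟶ a)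
    (h1 : IsIso (f ≫ g)) (h2 : IsIso (g ≫ f)) : IsIso f := by
  have hu : f ≫ (g ≫ inv (f ≫ g)) = 𝟙 a := by rw [← Category.assoc, IsIso.hom_inv_id]
  have hv : (inv (g ≫ f) ≫ g) ≫ f = 𝟙 b := by rw [Category.assoc, IsIso.inv_hom_id]
  have huv : inv (g ≫ f) ≫ g = g ≫ inv (f ≫ g) := by
    calc inv (g ≫ f) ≫ g = (inv (g ≫ f) ≫ g) ≫ (f ≫ (g ≫ inv (f ≫ g))) := by
          rw [hu, Category.comp_id]
      _ = ((inv (g ≫ f) ≫ g) ≫ f) ≫ (g ≫ inv (f ≫ g)) := by simp only [Category.assoc]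
      _ = g ≫ inv (f ≫ g) := by rw [hv, Category.id_comp]
  exact ⟨g ≫ inv (f ≫ g), hu, by rw [← huv, hv]⟩

private lemma isIso_of_epi_endo {C : Type*} [Category C] {x : C} [Finite (x ⟶ x)]
    (e : x ⟶ x) (he : Epi e) : IsIso e := by
  have hinj : Function.Injective (fun h : x ⟶ x => e ≫ h) := fun h₁ h₂ hh => by
    exact (cancel_epi e).1 hh
  obtain ⟨h, hh⟩ := (Finite.injective_iff_surjective.mp hinj) (𝟙 x)
  simp only at hh
  refine ⟨h, hh, ?_⟩
  have : e ≫ h ≫ e = e ≫ 𝟙 x := by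
    rw [← Category.assoc, hh, Category.id_comp, Category.comp_id]
  exact (cancel_epi e).1 this

private lemma isIso_of_mono_endo {C : Type*} [Category C] {x : C} [Finite (x ⟶ x)]
    (m : x ⟶ x) (hm : Mono m) : IsIso m := by
  have hinj : Function.Injective (fun h : x ⟶ x => h ≫ m) := fun h₁ h₂ hh => by
    exact (cancel_mono m).1 hh
  obtain ⟨h, hh⟩ := (Finite.injective_iff_surjective.mp hinj) (𝟙 x)
  simp only at hh
  refine ⟨h, ?_, hh⟩
  have : (m ≫ h) ≫ m = 𝟙 x ≫ m := by
    rw [Category.assoc, hh, Category.id_comp, Category.comp_id]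
  exact (cancel_mono m).1 this

private lemma isIso_of_epi_epi {C : Type*} [Category C] [∀ a b : C, Finite (a ⟶ b)]
    {a b : C} (f : a ⟶ b) (g : b ⟶ a) (hf : Epi f) (hg : Epi g) : IsIso f := by
  haveI := hf; haveI := hg
  exact isIso_of_comp_comp f g (isIso_of_epi_endo _ (epi_comp f g))
    (isIso_of_epi_endo _ (epi_comp g f))

private lemma isIso_of_mono_mono {C : Type*} [Category C] [∀ a b : C, Finite (a ⟶ b)]
    {a b : C} (f : a ⟶ b) (g : b ⟶ a) (hf : Mono f) (hg : Mono g) : IsIso f := by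
  haveI := hf; haveI := hg
  exact isIso_of_comp_comp f g (isIso_of_mono_endo _ (mono_comp f g))
    (isIso_of_mono_endo _ (mono_comp g f))

private lemma tri_injective {n : Type*} [Fintype n] [DecidableEq n]
    (A : Matrix n n ℚ) (r : n → n → Prop)
    (hrefl : ∀ i, r i i) (htrans : ∀ {i j k}, r i j → r j k → r i k)
    (hanti : ∀ {i j}, r i j → r j i → i = j)
    (hA : ∀ i j, A i j ≠ 0 → r i j)
    (hdiag : ∀ i, A i i ≠ 0) :
    Function.Injective A.mulVec := by
  letI : PartialOrder n :=
    { le := r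
      le_refl := hrefl
      le_trans := fun a b c hab hbc => htrans hab hbc
      le_antisymm := fun a b hab hba => hanti hab hba }
  have hker : ∀ x, A.mulVec x = 0 → x = 0 := by
    intro x hx
    by_contra hxne
    have hs : (Finset.univ.filter fun i => x i ≠ 0).Nonempty := by
      rcases Function.ne_iff.mp hxne with ⟨i, hi⟩
      exact ⟨i, Finset.mem_filter.mpr ⟨Finset.mem_univ _, hi⟩⟩
    obtain ⟨c, hc, hmax0⟩ := Finset.exists_maximal hs
    have hmax : ∀ z ∈ (Finset.univ.filter fun i => x i ≠ 0), ¬ c < z := fun z hz hlt =>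
      (lt_irrefl c) (lt_of_lt_of_le hlt (hmax0 hz hlt.le))
    have hxc : x c ≠ 0 := (Finset.mem_filter.mp hc).2
    have hsum : ∑ z : n, A c z * x z = 0 := by
      have := congrFun hx c
      simpa [Matrix.mulVec, dotProduct] using this
    have hsingle : ∑ z : n, A c z * x z = A c c * x c := by
      refine Finset.sum_eq_single c (fun z _ hzc => ?_) (fun h => absurd (Finset.mem_univ c) h)
      by_cases hz : x z = 0
      · simp [hz]
      · by_cases hAz : A c z = 0
        · simp [hAz]
        · exfalso
          have hr : r c z := hA _ _ hAz
          have hzs : z ∈ Finset.univ.filter fun i => x i ≠ 0 :=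
            Finset.mem_filter.mpr ⟨Finset.mem_univ _, hz⟩
          exact hmax z hzs (lt_of_le_of_ne hr (fun h => hzc h.symm))
    exact hxc (by
      have := hsingle ▸ hsum
      exact (mul_eq_zero.mp this).resolve_left (hdiag c))
  intro x y hxy
  have : A.mulVec (x - y) = 0 := by
    rw [Matrix.mulVec_sub, hxy, sub_self]
  have := hker _ this
  exact sub_eq_zero.mp this


/-- The rational Burnside homomorphism of a finite skeletal category with an epi-mono
factorization system is bijective: the map sending `x : C → ℚ` to the function
`c ↦ ∑ d, x d * #Hom(c,d)` is a bijection. -/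
theorem burnsideHom_bijective {C : Type*} [Category C] [Fintype C]
    [DecidableEq C] [∀ a b : C, Finite (a ⟶ b)] (hskel : Skeletal C)
    (P Q : MorphismProperty C)
    (hPepi : ∀ {a b : C} (f : a ⟶ b), P f → Epi f)
    (hQmono : ∀ {a b : C} (f : a ⟶ b), Q f → Mono f)
    (hPiso : ∀ {a b : C} (f : a ⟶ b), IsIso f → P f)
    (hQiso : ∀ {a b : C} (f : a ⟶ b), IsIso f → Q f)
    (hPcomp : ∀ {a b c : C} (f : a ⟶ b) (g : b ⟶ c), P f → P g → P (f ≫ g))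
    (hQcomp : ∀ {a b c : C} (f : a ⟶ b) (g : b ⟶ c), Q f → Q g → Q (f ≫ g))
    (hfact : ∀ {c d : C} (f : c ⟶ d),
      ∃ (z : C) (e : c ⟶ z) (m : z ⟶ d), P e ∧ Q m ∧ e ≫ m = f)
    (huniq : ∀ {c d z z' : C} (e : c ⟶ z) (e' : c ⟶ z') (m : z ⟶ d) (m' : z' ⟶ d),
      P e → P e' → Q m → Q m' → e ≫ m = e' ≫ m' →
      ∃ φ : z ≅ z', e ≫ φ.hom = e' ∧ φ.hom ≫ m' = m) :
    Function.Bijective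
      (fun (x : C → ℚ) (c : C) => ∑ d : C, x d * (Nat.card (c ⟶ d) : ℚ)) := by
  classical
  haveI instHom : ∀ a b : C, Fintype (a ⟶ b) := fun a b => Fintype.ofFinite _
  haveI instIsoF : ∀ a b : C, Finite (a ≅ b) := fun a b =>
    Finite.of_injective (fun i => Iso.hom i) fun i j h => Iso.ext h
  haveI instIso : ∀ a b : C, Fintype (a ≅ b) := fun a b => Fintype.ofFinite _
  haveI instNe : ∀ a : C, Nonempty (a ≅ a) := fun a => ⟨Iso.refl a⟩
  have haut : ∀ z : C, (Nat.card (z ≅ z) : ℚ) ≠ 0 := fun z =>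
    Nat.cast_ne_zero.mpr Nat.card_pos.ne'
  set E : Matrix C C ℚ :=
    Matrix.of fun c z => ((Finset.univ.filter fun e : c ⟶ z => P e).card : ℚ) with hEdef
  set N : Matrix C C ℚ := Matrix.of fun z d =>
    ((Nat.card (z ≅ z) : ℚ))⁻¹ * ((Finset.univ.filter fun m : z ⟶ d => Q m).card : ℚ) with hNdef
  set M : Matrix C C ℚ := Matrix.of fun c d => (Nat.card (c ⟶ d) : ℚ) with hMdef
  -- the fiber over `f` of the composition map on (P,Q)-pairs through `z` has the
  -- cardinality of `Aut z` as soon as it is nonempty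
  have hfib : ∀ (c d z : C) (f : c ⟶ d),
      (∃ (e : c ⟶ z) (m : z ⟶ d), P e ∧ Q m ∧ e ≫ m = f) →
      ((Finset.univ.filter fun p : (c ⟶ z) × (z ⟶ d) =>
        (P p.1 ∧ Q p.2) ∧ p.1 ≫ p.2 = f).card) = Nat.card (z ≅ z) := by
    rintro c d z f ⟨e₀, m₀, hPe₀, hQm₀, hcomp₀⟩
    haveI : Epi e₀ := hPepi e₀ hPe₀
    rw [Nat.card_eq_fintype_card, ← Finset.card_univ]
    refine (Finset.card_bij (fun (φ : z ≅ z) _ => (e₀ ≫ φ.hom, φ.inv ≫ m₀)) ?_ ?_ ?_).symm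
    · intro φ _
      refine Finset.mem_filter.mpr ⟨Finset.mem_univ _, ⟨⟨?_, ?_⟩, ?_⟩⟩
      · exact hPcomp _ _ hPe₀ (hPiso _ inferInstance)
      · exact hQcomp _ _ (hQiso _ inferInstance) hQm₀
      · rw [Category.assoc, φ.hom_inv_id_assoc, hcomp₀]
    · intro φ _ ψ _ h
      have h1 : e₀ ≫ φ.hom = e₀ ≫ ψ.hom := congrArg Prod.fst h
      exact Iso.ext ((cancel_epi e₀).1 h1)
    · rintro ⟨e, m⟩ hp
      rw [Finset.mem_filter] at hp
      obtain ⟨-, ⟨hPe, hQm⟩, hc⟩ := hp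
      obtain ⟨φ, hφ1, hφ2⟩ := huniq e₀ e m₀ m hPe₀ hPe hQm₀ hQm (by rw [hcomp₀, hc])
      refine ⟨φ, Finset.mem_univ _, ?_⟩
      have h2 : φ.inv ≫ m₀ = m := by
        rw [← hφ2, ← Category.assoc, φ.inv_hom_id, Category.id_comp]
      show (e₀ ≫ φ.hom, φ.inv ≫ m₀) = (e, m)
      rw [hφ1, h2]
  -- the matrix identity M = E * N, entrywise
  have hMEN : ∀ c d : C, M c d = ∑ z : C, E c z * N z d := by
    intro c d
    have hEN : ∀ z : C, E c z * N z d = ∑ f : c ⟶ d, (Nat.card (z ≅ z) : ℚ)⁻¹ *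
        ((Finset.univ.filter fun p : (c ⟶ z) × (z ⟶ d) =>
          (P p.1 ∧ Q p.2) ∧ p.1 ≫ p.2 = f).card : ℚ) := by
      intro z
      have h1 : (Finset.univ.filter fun p : (c ⟶ z) × (z ⟶ d) => P p.1 ∧ Q p.2).card
          = (Finset.univ.filter fun e : c ⟶ z => P e).card *
            (Finset.univ.filter fun m : z ⟶ d => Q m).card := by
        rw [← Finset.univ_product_univ, Finset.filter_product, Finset.card_product]
      have h2 : (Finset.univ.filter fun p : (c ⟶ z) × (z ⟶ d) => P p.1 ∧ Q p.2).card
          = ∑ f : c ⟶ d, (Finset.univ.filter fun p : (c ⟶ z) × (z ⟶ d) =>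
              (P p.1 ∧ Q p.2) ∧ p.1 ≫ p.2 = f).card := by
        rw [Finset.card_eq_sum_card_fiberwise
          (f := fun p : (c ⟶ z) × (z ⟶ d) => p.1 ≫ p.2) (t := Finset.univ)
          (fun p _ => Finset.mem_univ _)]
        simp [Finset.filter_filter]
      rw [← Finset.mul_sum]
      simp only [hEdef, hNdef, Matrix.of_apply]
      have h3 : ((Finset.univ.filter fun e : c ⟶ z => P e).card : ℚ) *
          ((Finset.univ.filter fun m : z ⟶ d => Q m).card : ℚ)
          = ∑ f : c ⟶ d, ((Finset.univ.filter fun p : (c ⟶ z) × (z ⟶ d) =>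
              (P p.1 ∧ Q p.2) ∧ p.1 ≫ p.2 = f).card : ℚ) := by
        rw [← Nat.cast_mul, ← h1, h2, Nat.cast_sum]
      rw [← h3]; ring
    calc M c d = ∑ f : c ⟶ d, (1 : ℚ) := by
          simp [hMdef, Nat.card_eq_fintype_card]
      _ = ∑ f : c ⟶ d, ∑ z : C, (Nat.card (z ≅ z) : ℚ)⁻¹ *
            ((Finset.univ.filter fun p : (c ⟶ z) × (z ⟶ d) =>
              (P p.1 ∧ Q p.2) ∧ p.1 ≫ p.2 = f).card : ℚ) := by
          refine Finset.sum_congr rfl fun f _ => ?_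
          obtain ⟨z₀, e₀, m₀, hPe₀, hQm₀, hc₀⟩ := hfact f
          have hzero : ∀ z : C, z ≠ z₀ →
              (Finset.univ.filter fun p : (c ⟶ z) × (z ⟶ d) =>
                (P p.1 ∧ Q p.2) ∧ p.1 ≫ p.2 = f) = ∅ := by
            intro z hz
            rw [Finset.filter_eq_empty_iff]
            rintro ⟨e, m⟩ - ⟨⟨hPe, hQm⟩, hc⟩
            obtain ⟨φ, -, -⟩ := huniq e e₀ m m₀ hPe hPe₀ hQm hQm₀ (by rw [hc, hc₀])
            exact hz (hskel ⟨φ⟩)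
          rw [Finset.sum_eq_single z₀ (fun z _ hz => by rw [hzero z hz]; simp)
            (fun h => absurd (Finset.mem_univ z₀) h)]
          rw [hfib c d z₀ f ⟨e₀, m₀, hPe₀, hQm₀, hc₀⟩, inv_mul_cancel₀ (haut z₀)]
      _ = ∑ z : C, E c z * N z d := by
          rw [Finset.sum_comm]
          exact Finset.sum_congr rfl fun z _ => (hEN z).symm
  have hMmat : M = E * N := Matrix.ext fun c d => by rw [Matrix.mul_apply]; exact hMEN c d
  -- triangularity of E with respect to the "epi" partial order
  have hEinj : Function.Injective E.mulVec := by
    refine tri_injective E (fun a b => ∃ e : a ⟶ b, Epi e)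
      (fun i => ⟨𝟙 i, inferInstance⟩) ?_ ?_ ?_ ?_
    · rintro i j k ⟨e₁, h₁⟩ ⟨e₂, h₂⟩
      haveI := h₁; haveI := h₂
      exact ⟨e₁ ≫ e₂, epi_comp _ _⟩
    · rintro i j ⟨e₁, h₁⟩ ⟨e₂, h₂⟩
      exact hskel ⟨@asIso _ _ _ _ e₁ (isIso_of_epi_epi e₁ e₂ h₁ h₂)⟩
    · intro i j hij
      simp only [hEdef, Matrix.of_apply, ne_eq, Nat.cast_eq_zero,
        Finset.card_eq_zero] at hij
      obtain ⟨e, he⟩ := Finset.nonempty_iff_ne_empty.mpr hij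
      exact ⟨e, hPepi e (Finset.mem_filter.mp he).2⟩
    · intro i
      simp only [hEdef, Matrix.of_apply]
      exact Nat.cast_ne_zero.mpr (Finset.card_pos.mpr ⟨𝟙 i,
        Finset.mem_filter.mpr ⟨Finset.mem_univ _, hPiso _ inferInstance⟩⟩).ne'
  -- triangularity of N with respect to the "mono" partial order
  have hNinj : Function.Injective N.mulVec := by
    refine tri_injective N (fun a b => ∃ m : a ⟶ b, Mono m)
      (fun i => ⟨𝟙 i, inferInstance⟩) ?_ ?_ ?_ ?_
    · rintro i j k ⟨m₁, h₁⟩ ⟨m₂, h₂⟩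
      haveI := h₁; haveI := h₂
      exact ⟨m₁ ≫ m₂, mono_comp _ _⟩
    · rintro i j ⟨m₁, h₁⟩ ⟨m₂, h₂⟩
      exact hskel ⟨@asIso _ _ _ _ m₁ (isIso_of_mono_mono m₁ m₂ h₁ h₂)⟩
    · intro i j hij
      simp only [hNdef, Matrix.of_apply, ne_eq, mul_eq_zero, not_or,
        Nat.cast_eq_zero, Finset.card_eq_zero] at hij
      obtain ⟨m, hm⟩ := Finset.nonempty_iff_ne_empty.mpr hij.2
      exact ⟨m, hQmono m (Finset.mem_filter.mp hm).2⟩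
    · intro i
      simp only [hNdef, Matrix.of_apply]
      refine mul_ne_zero (inv_ne_zero (haut i)) ?_
      exact Nat.cast_ne_zero.mpr (Finset.card_pos.mpr ⟨𝟙 i,
        Finset.mem_filter.mpr ⟨Finset.mem_univ _, hQiso _ inferInstance⟩⟩).ne'
  have hMinj : Function.Injective M.mulVec := by
    rw [hMmat]
    have hcomp : (E * N).mulVec = E.mulVec ∘ N.mulVec :=
      funext fun x => (Matrix.mulVec_mulVec x E N).symm
    rw [hcomp]
    exact hEinj.comp hNinj
  have hfun : (fun (x : C → ℚ) (c : C) => ∑ d : C, x d * (Nat.card (c ⟶ d) : ℚ))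
      = M.mulVec := by
    funext x c
    simp [hMdef, Matrix.mulVec, dotProduct, mul_comm]
  rw [hfun]
  refine ⟨hMinj, ?_⟩
  have hlin : Function.Injective (M.mulVecLin) := by
    intro x y hxy
    exact hMinj (by simpa [Matrix.mulVecLin_apply] using hxy)
  have hsurj := (LinearMap.injective_iff_surjective (f := M.mulVecLin)).mp hlin
  intro y
  obtain ⟨x, hx⟩ := hsurj y
  exact ⟨x, by simpa [Matrix.mulVecLin_apply] using hx⟩
end

section
/- (Kernel of the restriction map on rational abstract Burnside rings.) Let D be a category with finitely many objects and finite hom-sets, and let S be a set of objects of D such that there are no morphisms in D from any object of S to any object not in S (i.e., c ∈ S and d ∉ S implies Hom(c,d) is empty). Assume that the matrix H_S over ℚ indexed by S with entries (H_S) c d = #Hom(c,d) is invertible. Then the ℚ-linear map ψ : (objects of D → ℚ) → (S → ℚ) defined by ψ(x)(c) = Σ over all objects d of D of x(d) · #Hom(c,d) has kernel exactly the set of x vanishing on S, which is the ℚ-span of the basis vectors Pi.single d 1 for d ∉ S. -/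
open CategoryTheory

/-- Kernel of the restriction map on rational abstract Burnside rings: if `S` is a set
of objects of `D` admitting no morphisms out of `S` into its complement, and the
hom-set matrix of `S` is invertible, then the kernel of
`x ↦ (fun c : S => ∑ d, x d * #Hom(c,d))` consists exactly of the `x` vanishing on `S`,
which is the `ℚ`-span of the basis vectors `Pi.single d 1` for `d ∉ S`. -/
theorem kernel_restriction_burnside {D : Type*} [Category D] [Fintype D]
    [DecidableEq D] [∀ a b : D, Finite (a ⟶ b)]
    (S : Set D) [DecidablePred (· ∈ S)]
    (hS : ∀ c d : D, c ∈ S → d ∉ S → IsEmpty (c ⟶ d))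
    (hinv : IsUnit (Matrix.of fun c d : S =>
      (Nat.card ((c : D) ⟶ (d : D)) : ℚ)).det) :
    {x : D → ℚ |
        (fun c : S => ∑ d : D, x d * (Nat.card ((c : D) ⟶ d) : ℚ)) = 0} =
      {x : D → ℚ | ∀ c ∈ S, x c = 0} ∧
    {x : D → ℚ | ∀ c ∈ S, x c = 0} =
      ↑(Submodule.span ℚ {v : D → ℚ | ∃ d ∉ S, v = Pi.single d 1}) := by

  set M : Matrix S S ℚ := Matrix.of fun c d : S =>
      (Nat.card ((c : D) ⟶ (d : D)) : ℚ) with hM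
  have hMunit : IsUnit M := (Matrix.isUnit_iff_isUnit_det M).2 hinv
  have hMinj := Matrix.mulVec_injective_iff_isUnit.2 hMunit
  -- key: the full sum restricts to S
  have key : ∀ (x : D → ℚ) (c : S),
      ∑ d : D, x d * (Nat.card ((c : D) ⟶ d) : ℚ)
        = M.mulVec (fun d : S => x d) c := by
    intro x c
    have h1 : ∑ d : D, x d * (Nat.card ((c : D) ⟶ d) : ℚ)
        = ∑ d ∈ Finset.univ.filter (· ∈ S), x d * (Nat.card ((c : D) ⟶ d) : ℚ) := by
      refine (Finset.sum_subset (Finset.filter_subset _ _) ?_).symm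
      intro d _ hd
      simp only [Finset.mem_filter, Finset.mem_univ, true_and] at hd
      haveI := hS c d c.2 hd
      simp [Nat.card_eq_zero]
    rw [h1, Finset.sum_subtype (p := (· ∈ S)) _ (fun d => by simp)
      (fun d => x d * (Nat.card ((c : D) ⟶ d) : ℚ))]
    rw [Matrix.mulVec]
    simp only [dotProduct, hM, Matrix.of_apply]
    exact Finset.sum_congr rfl fun d _ => mul_comm _ _
  constructor
  · ext x
    simp only [Set.mem_setOf_eq]
    constructor
    · intro h c hc
      have h0 : M.mulVec (fun d : S => x d) = 0 := by
        funext c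
        rw [← key x c]
        exact congrFun h c
      have := hMinj (h0.trans (M.mulVec_zero).symm)
      exact congrFun this ⟨c, hc⟩
    · intro h
      funext c
      rw [key x c]
      have : (fun d : S => x d) = 0 := funext fun d => h d d.2
      simp [this]
  · ext x
    simp only [Set.mem_setOf_eq, SetLike.mem_coe]
    constructor
    · intro h
      have hx : x = ∑ d ∈ Finset.univ.filter (· ∉ S), x d • (Pi.single d (1 : ℚ) : D → ℚ) := by
        funext e
        rw [Finset.sum_apply]
        by_cases he : e ∈ S
        · rw [h e he]
          refine (Finset.sum_eq_zero fun d hd => ?_).symm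
          simp only [Finset.mem_filter, Finset.mem_univ, true_and] at hd
          have : e ≠ d := fun h' => hd (h' ▸ he)
          simp [Pi.single_eq_of_ne' (Ne.symm this)]
        · rw [Finset.sum_eq_single e]
          · simp
          · intro d _ hde
            simp [Pi.single_eq_of_ne' hde]
          · intro h'
            simp [he] at h'
      rw [hx]
      exact Submodule.sum_mem _ fun d hd => Submodule.smul_mem _ _
        (Submodule.subset_span ⟨d, by simpa using (Finset.mem_filter.1 hd).2, rfl⟩)
    · intro h c hc
      induction h using Submodule.span_induction with
      | mem v hv =>
        obtain ⟨d, hd, rfl⟩ := hv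
        have : c ≠ d := fun h' => hd (h' ▸ hc)
        simp [Pi.single_eq_of_ne' (Ne.symm this)]
      | zero => simp
      | add u v _ _ hu hv => simp [hu, hv]
      | smul a v _ hv => simp [hv]
end

section
/- For every natural number d ≥ 1, the matrix H(d) : Matrix (Fin d) (Fin d) ℚ with entries H(d) i j = surj(i+1, j+1) (the number of surjections from a set with i+1 elements onto a set with j+1 elements) has determinant equal to the product over k from 1 to d of k!. In particular H(d) is invertible over ℚ. (This is the hom-set matrix of the category Epi_{≤d} of finite sets of cardinality at most d and surjections; its invertibility says the rational Goodwillie–Burnside ring A_ℚ(d) is isomorphic to ℚ^d.) -/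
noncomputable def surj (n k : ℕ) : ℕ := Nat.card {f : Fin n → Fin k // Function.Surjective f}

open Finset

lemma surj_zero (n : ℕ) (hn : 1 ≤ n) : surj n 0 = 0 := by
  have : IsEmpty {f : Fin n → Fin 0 // Function.Surjective f} := by
    constructor; rintro ⟨f, -⟩
    exact (f ⟨0, hn⟩).elim0
  simp [surj, Nat.card_of_isEmpty]

/-- surjections onto a `j`-element finset are counted by `surj n j`. -/
lemma card_image_fiber (n k : ℕ) (S : Finset (Fin k)) :
    Fintype.card {f : Fin n → Fin k // Finset.image f Finset.univ = S} = surj n S.card := by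
  classical
  have e1 : {f : Fin n → Fin k // Finset.image f Finset.univ = S} ≃
      {g : Fin n → {x // x ∈ S} // Function.Surjective g} :=
    { toFun := fun f => ⟨fun x => ⟨f.1 x, by
        have := Finset.mem_image_of_mem f.1 (Finset.mem_univ x)
        rwa [f.2] at this⟩, by
        rintro ⟨y, hy⟩
        rw [← f.2] at hy
        obtain ⟨x, -, hx⟩ := Finset.mem_image.mp hy
        exact ⟨x, by simpa using hx⟩⟩
      invFun := fun g => ⟨fun x => (g.1 x).1, by
        ext y
        simp only [Finset.mem_image, Finset.mem_univ, true_and]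
        constructor
        · rintro ⟨x, rfl⟩; exact (g.1 x).2
        · intro hy
          obtain ⟨x, hx⟩ := g.2 ⟨y, hy⟩
          exact ⟨x, by rw [hx]⟩⟩
      left_inv := fun f => by apply Subtype.ext; funext x; rfl
      right_inv := fun g => by apply Subtype.ext; funext x; apply Subtype.ext; rfl }
  have e2 : {g : Fin n → {x // x ∈ S} // Function.Surjective g} ≃
      {f : Fin n → Fin S.card // Function.Surjective f} := by
    have e : {x // x ∈ S} ≃ Fin S.card :=
      Fintype.equivFinOfCardEq (Fintype.card_coe S)
    exact Equiv.subtypeEquiv (Equiv.arrowCongr (Equiv.refl _) e) (by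
      intro f
      constructor
      · intro hf; exact e.surjective.comp hf
      · intro hf y
        obtain ⟨x, hx⟩ := hf (e y)
        exact ⟨x, e.injective (by simpa [Equiv.arrowCongr] using hx)⟩)
  rw [Fintype.card_congr (e1.trans e2)]
  simp [surj, Nat.card_eq_fintype_card]

lemma sum_choose_surj (n k : ℕ) :
    ∑ j ∈ Finset.range (k + 1), k.choose j * surj n j = k ^ n := by
  classical
  have hpart := Finset.card_eq_sum_card_fiberwise
    (s := (Finset.univ : Finset (Fin n → Fin k)))
    (t := (Finset.univ : Finset (Fin k)).powerset)
    (f := fun f => Finset.image f Finset.univ)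
    (fun f _ => Finset.mem_powerset.mpr (Finset.subset_univ _))
  have hcard : (Finset.univ : Finset (Fin n → Fin k)).card = k ^ n := by
    simp [Fintype.card_fun]
  rw [hcard] at hpart
  have hfiber : ∀ S : Finset (Fin k),
      (Finset.univ.filter fun f : Fin n → Fin k => Finset.image f Finset.univ = S).card
        = surj n S.card := by
    intro S
    rw [← card_image_fiber n k S, Fintype.card_subtype]
  rw [Finset.sum_congr rfl (fun S _ => hfiber S)] at hpart
  rw [Finset.sum_powerset] at hpart
  rw [hpart]
  simp only [Finset.card_univ, Fintype.card_fin]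
  refine Finset.sum_congr rfl fun j _ => ?_
  rw [Finset.sum_congr rfl (fun S hS => by
    rw [(Finset.mem_powersetCard.mp hS).2]), Finset.sum_const, Finset.card_powersetCard,
    Finset.card_univ, Fintype.card_fin, smul_eq_mul]

lemma key (n j d : ℕ) (hn : 1 ≤ n) (hj : j < d) :
    ∑ l ∈ Finset.range d, surj n (l + 1) * (j + 1).choose (l + 1) = (j + 1) ^ n := by
  rw [← Finset.sum_subset (Finset.range_subset_range.mpr hj)
    (f := fun l => surj n (l + 1) * (j + 1).choose (l + 1))
    (fun l _ hl => by
      rw [Finset.mem_range, not_lt] at hl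
      rw [Nat.choose_eq_zero_of_lt (by omega), mul_zero])]
  have h := sum_choose_surj n (j + 1)
  rw [Finset.sum_range_succ'] at h
  rw [surj_zero n hn, mul_zero, add_zero] at h
  rw [← h]
  exact Finset.sum_congr rfl fun x _ => mul_comm _ _

/-- The hom-set matrix of `Epi_{≤ d}`, with entries the surjection numbers
`surj (i+1) (j+1)`, has determinant `∏_{k=1}^{d} k!`; in particular it is invertible
over `ℚ`. -/
theorem det_surjMatrix (d : ℕ) (hd : 1 ≤ d) :
    (Matrix.of fun i j : Fin d => (surj ((i : ℕ) + 1) ((j : ℕ) + 1) : ℚ)).det =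
      ∏ k ∈ Finset.Icc 1 d, (Nat.factorial k : ℚ) ∧
    IsUnit (Matrix.of fun i j : Fin d =>
      (surj ((i : ℕ) + 1) ((j : ℕ) + 1) : ℚ)).det := by
  obtain ⟨m, rfl⟩ : ∃ m, d = m + 1 := ⟨d - 1, by omega⟩
  set H : Matrix (Fin (m + 1)) (Fin (m + 1)) ℚ :=
    Matrix.of fun i j => (surj ((i : ℕ) + 1) ((j : ℕ) + 1) : ℚ) with hH
  set B : Matrix (Fin (m + 1)) (Fin (m + 1)) ℚ :=
    Matrix.of fun l j => (((j : ℕ) + 1).choose ((l : ℕ) + 1) : ℚ) with hB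
  set P : Matrix (Fin (m + 1)) (Fin (m + 1)) ℚ :=
    Matrix.of fun i j => ((((j : ℕ) + 1) ^ ((i : ℕ) + 1) : ℕ) : ℚ) with hP
  have hHB : H * B = P := by
    ext i j
    rw [Matrix.mul_apply]
    simp only [hH, hB, hP, Matrix.of_apply]
    rw [Fin.sum_univ_eq_sum_range
      (fun l => ((surj ((i : ℕ) + 1) (l + 1) : ℚ) * (((j : ℕ) + 1).choose (l + 1) : ℚ)))]
    rw [← key ((i : ℕ) + 1) (j : ℕ) (m + 1) (by omega) j.isLt]
    push_cast
    ring
  have hBdet : B.det = 1 := by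
    rw [Matrix.det_of_upperTriangular (by
      intro i j hij
      have h' : (j : ℕ) < (i : ℕ) := hij
      have hz : ((j : ℕ) + 1).choose ((i : ℕ) + 1) = 0 :=
        Nat.choose_eq_zero_of_lt (by omega)
      simp only [hB, Matrix.of_apply, hz, Nat.cast_zero])]
    simp [hB]
  have hPdet : P.det = ((Nat.superFactorial (m + 1) : ℕ) : ℚ) := by
    have ht : P = Matrix.transpose (Matrix.of fun i j : Fin (m + 1) =>
        ((i : ℚ) + 1) * Matrix.vandermonde (fun i : Fin (m + 1) => ((i : ℚ) + 1)) i j) := by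
      ext i j
      simp only [hP, Matrix.transpose_apply, Matrix.of_apply, Matrix.vandermonde]
      push_cast
      ring
    rw [ht, Matrix.det_transpose, Matrix.det_mul_column]
    have hv : (Matrix.vandermonde (fun i : Fin (m + 1) => ((i : ℚ) + 1))).det
        = (Matrix.vandermonde (fun i : Fin (m + 1) => ((i : ℚ)))).det := by
      rw [Matrix.det_vandermonde, Matrix.det_vandermonde]
      exact Finset.prod_congr rfl fun i _ => Finset.prod_congr rfl fun j _ => by ring
    rw [hv, Matrix.det_vandermonde_id_eq_superFactorial]
    have hprod : (∏ i : Fin (m + 1), ((i : ℚ) + 1)) = ((m + 1).factorial : ℚ) := by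
      rw [Fin.prod_univ_eq_prod_range (fun i => ((i : ℚ) + 1))]
      rw [← Finset.prod_range_add_one_eq_factorial]
      push_cast
      rfl
    rw [hprod, Nat.superFactorial_succ]
    push_cast
    ring
  have hdet : H.det = ∏ k ∈ Finset.Icc 1 (m + 1), (Nat.factorial k : ℚ) := by
    have := congrArg Matrix.det hHB
    rw [Matrix.det_mul, hBdet, mul_one] at this
    rw [this, hPdet, ← Nat.prod_Icc_factorial]
    push_cast
    rfl
  refine ⟨hdet, ?_⟩
  rw [hdet]
  exact IsUnit.mk0 _ (Finset.prod_ne_zero_iff.mpr fun k _ =>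
    Nat.cast_ne_zero.mpr (Nat.factorial_ne_zero k))
end

section
/- For all natural numbers n and m, the sum over k from 0 to n of ((descPochhammer ℤ n).coeff k) · surj(k, m) equals n! if n = m and 0 otherwise. (This is the identity Σ_k s(n,k)·|surj(k,m)| = n!·δ_{nm} expressing that the matrix of signed Stirling numbers of the first kind divided by factorials inverts the matrix of surjection numbers, used in the paper's computation of the inverse hom-set matrix of Epi_{≤d}.) -/
open Finset Function

/-- Functions with image `s` correspond to surjections onto `s`. -/
def imageEquivSurj {k m : ℕ} (s : Finset (Fin m)) :
    {f : Fin k → Fin m // Finset.image f Finset.univ = s} ≃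
      {g : Fin k → {x // x ∈ s} // Surjective g} where
  toFun f := ⟨fun x => ⟨f.1 x, by
      obtain ⟨f, rfl⟩ := f; exact mem_image_of_mem _ (mem_univ x)⟩, by
    rintro ⟨y, hy⟩
    obtain ⟨f, rfl⟩ := f
    obtain ⟨x, -, hx⟩ := mem_image.1 hy
    exact ⟨x, Subtype.ext hx⟩⟩
  invFun g := ⟨fun x => (g.1 x).1, by
    ext y
    simp only [mem_image, mem_univ, true_and]
    constructor
    · rintro ⟨x, rfl⟩; exact (g.1 x).2
    · intro hy
      obtain ⟨x, hx⟩ := g.2 ⟨y, hy⟩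
      exact ⟨x, congrArg Subtype.val hx⟩⟩
  left_inv f := rfl
  right_inv g := rfl

lemma surj_card (k : ℕ) (α : Type) [Fintype α] :
    Nat.card {g : Fin k → α // Surjective g} = surj k (Fintype.card α) := by
  classical
  exact Nat.card_congr (Equiv.subtypeEquiv
    (Equiv.arrowCongr (Equiv.refl _) (Fintype.equivFin α))
    (fun g => ((Fintype.equivFin α).comp_surjective g).symm))

lemma pow_eq_sum_surj (k m : ℕ) :
    (m : ℕ) ^ k = ∑ j ∈ range (m + 1), (m.choose j) * surj k j := by
  classical
  have h1 : (m : ℕ) ^ k = Fintype.card (Fin k → Fin m) := by simp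
  rw [h1, Fintype.card_congr (Equiv.sigmaFiberEquiv
      (fun f : Fin k → Fin m => Finset.image f Finset.univ)).symm]
  rw [Fintype.card_sigma]
  have h2 : ∀ s : Finset (Fin m),
      Fintype.card {f : Fin k → Fin m // Finset.image f Finset.univ = s} = surj k s.card := by
    intro s
    rw [← Nat.card_eq_fintype_card, Nat.card_congr (imageEquivSurj s), surj_card,
      Fintype.card_coe]
  simp_rw [h2]
  rw [← Finset.powerset_univ (α := Fin m), Finset.sum_powerset]
  rw [Finset.card_univ, Fintype.card_fin]
  refine Finset.sum_congr rfl fun j hj => ?_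
  rw [Finset.sum_congr rfl (fun t ht => by
    rw [(Finset.mem_powersetCard.1 ht).2]), Finset.sum_const,
    Finset.card_powersetCard, Finset.card_univ, Fintype.card_fin, smul_eq_mul]

lemma key_s14 (n m : ℕ) :
    ∑ j ∈ Finset.range (m + 1), (m.choose j : ℤ) *
        ∑ k ∈ Finset.range (n + 1), (descPochhammer ℤ n).coeff k * (surj k j : ℤ) =
      (n.factorial : ℤ) * m.choose n := by
  simp_rw [Finset.mul_sum]
  rw [Finset.sum_comm]
  have h1 : ∀ k ∈ Finset.range (n + 1),
      ∑ j ∈ Finset.range (m + 1),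
          (m.choose j : ℤ) * ((descPochhammer ℤ n).coeff k * (surj k j : ℤ)) =
        (descPochhammer ℤ n).coeff k * (m : ℤ) ^ k := by
    intro k _
    have hp := congrArg (Nat.cast : ℕ → ℤ) (pow_eq_sum_surj k m)
    push_cast at hp
    calc ∑ j ∈ Finset.range (m + 1),
            (m.choose j : ℤ) * ((descPochhammer ℤ n).coeff k * (surj k j : ℤ))
        = (descPochhammer ℤ n).coeff k *
            ∑ j ∈ Finset.range (m + 1), (m.choose j : ℤ) * (surj k j : ℤ) := by
          rw [Finset.mul_sum]; exact Finset.sum_congr rfl fun j _ => by ring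
      _ = (descPochhammer ℤ n).coeff k * (m : ℤ) ^ k := by rw [← hp]
  rw [Finset.sum_congr rfl h1]
  have h2 : ∑ k ∈ Finset.range (n + 1), (descPochhammer ℤ n).coeff k * (m : ℤ) ^ k
      = (descPochhammer ℤ n).eval (m : ℤ) := by
    conv_lhs => rw [show n + 1 = (descPochhammer ℤ n).natDegree + 1 by
      rw [descPochhammer_natDegree]]
    rw [← Polynomial.eval_eq_sum_range]
  rw [h2, descPochhammer_eval_eq_descFactorial,
    Nat.descFactorial_eq_factorial_mul_choose]
  push_cast
  ring

/-- The identity `∑_{k=0}^{n} s(n,k) · |surj(k,m)| = n! · δ_{n m}` in `ℤ`, where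
`s(n,k)` is the signed Stirling number of the first kind, realized as the `k`-th
coefficient of the falling factorial polynomial `descPochhammer ℤ n`. -/
theorem stirling_surj_orthogonality (n m : ℕ) :
    ∑ k ∈ Finset.range (n + 1),
        ((descPochhammer ℤ n).coeff k) * (surj k m : ℤ) =
      if n = m then (Nat.factorial n : ℤ) else 0 := by
  induction m using Nat.strong_induction_on with
  | _ m ih =>
    have hkey := key_s14 n m
    rw [Finset.sum_range_succ] at hkey
    rw [Finset.sum_congr rfl (fun j hj => by
      rw [ih j (Finset.mem_range.1 hj)])] at hkey
    simp only [mul_ite, mul_zero, Nat.choose_self, Nat.cast_one, one_mul] at hkey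
    rw [Finset.sum_ite_eq (Finset.range m) n
      (fun j => ((m.choose j : ℤ) * (n.factorial : ℤ)))] at hkey
    rcases lt_trichotomy n m with h | h | h
    · rw [if_pos (Finset.mem_range.2 h)] at hkey
      rw [if_neg (by omega)]
      linarith [hkey]
    · subst h
      rw [if_neg (by simp)] at hkey
      simp only [Nat.choose_self, Nat.cast_one, mul_one] at hkey
      rw [if_pos rfl]
      linarith [hkey]
    · rw [if_neg (by simp; omega), Nat.choose_eq_zero_of_lt h] at hkey
      rw [if_neg (by omega)]
      simpa using hkey
end

section
/- (The kernel of A_ℚ(d) → A_ℚ(d−1) is generated by the top class [d].) Let d ≥ 2. The ℚ-linear map ψ : (Fin d → ℚ) → (Fin (d−1) → ℚ) defined by ψ(x)(i) = Σ over j : Fin d of x(j) · surj(i+1, j+1) has kernel equal to the one-dimensional span of the basis vector Pi.single (last index of Fin d) 1. (This is the map on rational Goodwillie–Burnside rings induced by the inclusion Epi_{≤ d−1} ↪ Epi_{≤ d}, whose kernel is generated by [d], equivalently by the top idempotent e_d = (1/d!)·[d].) -/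
lemma surj_eq_zero {n k : ℕ} (h : n < k) : surj n k = 0 := by
  have : IsEmpty {f : Fin n → Fin k // Function.Surjective f} := by
    refine ⟨fun ⟨f, hf⟩ => ?_⟩
    have := Fintype.card_le_of_surjective f hf
    simp at this
    omega
  simp [surj, Nat.card_of_isEmpty]

lemma surj_pos (n : ℕ) : 0 < surj n n := by
  have : Nonempty {f : Fin n → Fin n // Function.Surjective f} :=
    ⟨⟨id, Function.surjective_id⟩⟩
  exact Nat.card_pos

/-- The kernel of the map `A_ℚ(d) → A_ℚ(d-1)` on rational Goodwillie–Burnside rings,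
realized as the `ℚ`-linear map `(Fin d → ℚ) → (Fin (d-1) → ℚ)` with
`ψ(x)(i) = ∑ j, x j · surj (i+1) (j+1)`, is exactly the span of the top basis vector
`Pi.single ⟨d-1, _⟩ 1` corresponding to the class `[d]`. -/
theorem kernel_goodwillieBurnside_restriction (d : ℕ) (hd : 2 ≤ d) :
    {x : Fin d → ℚ |
        (fun i : Fin (d - 1) =>
          ∑ j : Fin d, x j * (surj ((i : ℕ) + 1) ((j : ℕ) + 1) : ℚ)) = 0} =
      ↑(Submodule.span ℚ
        ({Pi.single (⟨d - 1, by omega⟩ : Fin d) 1} : Set (Fin d → ℚ))) := by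
  ext x
  simp only [Set.mem_setOf_eq, SetLike.mem_coe, Submodule.mem_span_singleton]
  constructor
  · intro hx
    have key : ∀ m, m < d - 1 → ∀ (hm : m < d), x ⟨m, hm⟩ = 0 := by
      intro m
      induction m using Nat.strong_induction_on with
      | _ m ih =>
        intro hm1 hm
        have h0 := congrFun hx ⟨m, hm1⟩
        simp only [Pi.zero_apply] at h0
        rw [Finset.sum_eq_single (⟨m, hm⟩ : Fin d)] at h0
        · have hc : (0 : ℚ) < (surj (m + 1) (m + 1) : ℚ) := by
            exact_mod_cast surj_pos (m + 1)
          exact (mul_eq_zero.mp h0).resolve_right (ne_of_gt hc)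
        · intro j _ hj
          rcases lt_trichotomy (j : ℕ) m with h | h | h
          · rw [ih j h (by omega) j.isLt]
            ring
          · exact absurd (Fin.ext h) hj
          · rw [surj_eq_zero (by omega)]
            simp
        · intro h
          exact absurd (Finset.mem_univ _) h
    refine ⟨x ⟨d - 1, by omega⟩, ?_⟩
    funext j
    rcases eq_or_ne j (⟨d - 1, by omega⟩ : Fin d) with rfl | hj
    · simp
    · have : (j : ℕ) < d - 1 := by
        have := j.isLt
        rcases lt_trichotomy (j : ℕ) (d - 1) with h | h | h
        · exact h
        · exact absurd (Fin.ext h) hj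
        · omega
      simp [Pi.single_apply, hj, key j this j.isLt]
  · rintro ⟨a, rfl⟩
    funext i
    simp only [Pi.zero_apply]
    rw [Finset.sum_eq_single (⟨d - 1, by omega⟩ : Fin d)]
    · rw [show ((⟨d - 1, by omega⟩ : Fin d) : ℕ) = d - 1 from rfl,
        surj_eq_zero (show (i : ℕ) + 1 < d - 1 + 1 by have := i.isLt; omega)]
      simp
    · intro j _ hj
      simp [Pi.single_apply, hj]
    · intro h
      exact absurd (Finset.mem_univ _) h
end
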